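/- Under the hypotheses of the previous statement, if q̂_α denotes the empirical (1−α)-quantile of (ζ̂_t : t ≤ T), then F(q̂_α) → 1−α in probability as T → ∞. -/

import Mathlib

open MeasureTheory Finset Filter

lemma lln_ind {Ω : Type*} [MeasurableSpace Ω] (ℙ : Measure Ω) [IsProbabilityMeasure ℙ]
    (ζ : ℕ → Ω → ℝ) (hmeas : ∀ t, Measurable (ζ t))
    (hindep : ProbabilityTheory.iIndepFun ζ ℙ)
    (hid : ∀ i, ProbabilityTheory.IdentDistrib (ζ i) (ζ 0) ℙ ℙ)
    (c : ℝ) (δ : ℝ) (hδ : 0 < δ) :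
    Tendsto (fun T => ℙ {ω | δ ≤ |(∑ t ∈ range T, if ζ t ω ≤ c then (1:ℝ) else 0)/T
      - (ℙ {ω | ζ 0 ω ≤ c}).toReal|}) atTop (nhds 0) := by
  classical
  set g : ℝ → ℝ := fun x => if x ≤ c then (1:ℝ) else 0 with hg
  have hgm : Measurable g := Measurable.ite measurableSet_Iic measurable_const measurable_const
  set X : ℕ → Ω → ℝ := fun t ω => g (ζ t ω) with hX
  have hXm : ∀ t, Measurable (X t) := fun t => hgm.comp (hmeas t)
  have hint : Integrable (X 0) ℙ := by
    refine (integrable_const (1:ℝ)).mono' (hXm 0).aestronglyMeasurable ?_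
    filter_upwards with ω
    simp only [X, g]
    split <;> simp
  have hpind : Pairwise (Function.onFun (ProbabilityTheory.IndepFun · · ℙ) X) := by
    intro i j hij
    exact (hindep.indepFun hij).comp hgm hgm
  have hident : ∀ i, ProbabilityTheory.IdentDistrib (X i) (X 0) ℙ ℙ :=
    fun i => (hid i).comp hgm
  have hmean : (∫ ω, X 0 ω ∂ℙ) = (ℙ {ω | ζ 0 ω ≤ c}).toReal := by
    have : X 0 = Set.indicator {ω | ζ 0 ω ≤ c} (fun _ => (1:ℝ)) := by
      funext ω
      simp only [X, g, Set.indicator, Set.mem_setOf_eq]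
    rw [this, integral_indicator_const (1:ℝ) (show MeasurableSet {ω | ζ 0 ω ≤ c} from (hmeas 0) measurableSet_Iic), smul_eq_mul, mul_one, measureReal_def]
  have hslln := ProbabilityTheory.strong_law_ae_real X hint hpind hident
  rw [hmean] at hslln
  have htim : TendstoInMeasure ℙ (fun T ω => (∑ t ∈ range T, X t ω) / T) atTop
      (fun _ => (ℙ {ω | ζ 0 ω ≤ c}).toReal) := by
    refine tendstoInMeasure_of_tendsto_ae (fun T => ?_) hslln
    exact ((Finset.measurable_sum _ (fun t _ => hXm t)).div_const _).aestronglyMeasurable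
  have h2 := tendstoInMeasure_iff_dist.mp htim δ hδ
  simpa only [Real.dist_eq, X, g] using h2

lemma tilde_tendsto {Ω : Type*} [MeasurableSpace Ω] (ℙ : Measure Ω) [IsProbabilityMeasure ℙ]
    (ζ : ℕ → Ω → ℝ) (hmeas : ∀ t, Measurable (ζ t))
    (hindep : ProbabilityTheory.iIndepFun ζ ℙ)
    (hid : ∀ i, ProbabilityTheory.IdentDistrib (ζ i) (ζ 0) ℙ ℙ)
    (ζhat : ℕ → ℕ → Ω → ℝ)
    (hconsist : ∀ ε : ℝ, 0 < ε →
      Tendsto (fun T => ℙ {ω | ∃ t < T, ε < |ζhat T t ω - ζ t ω|}) atTop (nhds 0))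
    (G : ℝ → ℝ) (hG : ∀ c, G c = (ℙ {ω | ζ 0 ω ≤ c}).toReal) (hGcont : Continuous G)
    (z δ : ℝ) (hδ : 0 < δ) :
    Tendsto (fun T => ℙ {ω | δ ≤ |(∑ t ∈ range T, if ζhat T t ω ≤ z then (1:ℝ) else 0)/T
      - G z|}) atTop (nhds 0) := by
  classical
  obtain ⟨s, hs, hsc⟩ := Metric.continuousAt_iff.mp (hGcont.continuousAt (x := z)) (δ/2) (by linarith)
  set c₁ := z + s/2 with hc₁
  set c₂ := z - s/2 with hc₂
  have hdist1 : dist c₁ z < s := by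
    rw [Real.dist_eq, hc₁, show z + s/2 - z = s/2 by ring, abs_of_nonneg (by linarith)]; linarith
  have hdist2 : dist c₂ z < s := by
    rw [Real.dist_eq, hc₂, show z - s/2 - z = -(s/2) by ring, abs_neg,
      abs_of_nonneg (by linarith)]; linarith
  have hGc₁ : |G c₁ - G z| < δ/2 := by have := hsc hdist1; rwa [Real.dist_eq] at this
  have hGc₂ : |G c₂ - G z| < δ/2 := by have := hsc hdist2; rwa [Real.dist_eq] at this
  have hA := hconsist (s/2) (by linarith)
  have hB₁ := lln_ind ℙ ζ hmeas hindep hid c₁ (δ/2) (by linarith)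
  have hB₂ := lln_ind ℙ ζ hmeas hindep hid c₂ (δ/2) (by linarith)
  rw [← hG c₁] at hB₁
  rw [← hG c₂] at hB₂
  have hsub : ∀ T, {ω | δ ≤ |(∑ t ∈ range T, if ζhat T t ω ≤ z then (1:ℝ) else 0)/T - G z|}
      ⊆ {ω | ∃ t < T, s/2 < |ζhat T t ω - ζ t ω|}
        ∪ ({ω | δ/2 ≤ |(∑ t ∈ range T, if ζ t ω ≤ c₁ then (1:ℝ) else 0)/T - G c₁|}
        ∪ {ω | δ/2 ≤ |(∑ t ∈ range T, if ζ t ω ≤ c₂ then (1:ℝ) else 0)/T - G c₂|}) := by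
    intro T ω hω
    simp only [Set.mem_setOf_eq] at hω
    by_cases hAω : ∃ t < T, s/2 < |ζhat T t ω - ζ t ω|
    · exact Or.inl hAω
    push_neg at hAω
    right
    have hle1 : (∑ t ∈ range T, if ζhat T t ω ≤ z then (1:ℝ) else 0)
        ≤ ∑ t ∈ range T, if ζ t ω ≤ c₁ then (1:ℝ) else 0 := by
      refine Finset.sum_le_sum (fun t ht => ?_)
      have habs := hAω t (mem_range.mp ht)
      have := abs_le.mp habs
      by_cases h : ζhat T t ω ≤ z
      · rw [if_pos h, if_pos (by simp only [hc₁]; linarith [this.1])]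
      · rw [if_neg h]; split <;> norm_num
    have hle2 : (∑ t ∈ range T, if ζ t ω ≤ c₂ then (1:ℝ) else 0)
        ≤ ∑ t ∈ range T, if ζhat T t ω ≤ z then (1:ℝ) else 0 := by
      refine Finset.sum_le_sum (fun t ht => ?_)
      have habs := hAω t (mem_range.mp ht)
      have := abs_le.mp habs
      by_cases h : ζ t ω ≤ c₂
      · rw [if_pos h, if_pos (by simp only [hc₂] at h; linarith [this.2])]
      · rw [if_neg h]; split <;> norm_num
    have hT : (0:ℝ) ≤ T := Nat.cast_nonneg T
    have hd1 : (∑ t ∈ range T, if ζhat T t ω ≤ z then (1:ℝ) else 0)/T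
        ≤ (∑ t ∈ range T, if ζ t ω ≤ c₁ then (1:ℝ) else 0)/T := by
      exact div_le_div_of_nonneg_right hle1 (Nat.cast_nonneg T)
    have hd2 : (∑ t ∈ range T, if ζ t ω ≤ c₂ then (1:ℝ) else 0)/T
        ≤ (∑ t ∈ range T, if ζhat T t ω ≤ z then (1:ℝ) else 0)/T := by
      exact div_le_div_of_nonneg_right hle2 (Nat.cast_nonneg T)
    have hab := le_abs.mp hω
    rcases hab with h | h
    · left
      simp only [Set.mem_setOf_eq]
      have h1 := (abs_lt.mp hGc₁).2
      have : δ/2 ≤ (∑ t ∈ range T, if ζ t ω ≤ c₁ then (1:ℝ) else 0)/T - G c₁ := by linarith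
      exact this.trans (le_abs_self _)
    · right
      simp only [Set.mem_setOf_eq]
      have h2 := (abs_lt.mp hGc₂).1
      have : δ/2 ≤ -((∑ t ∈ range T, if ζ t ω ≤ c₂ then (1:ℝ) else 0)/T - G c₂) := by linarith
      exact this.trans (neg_le_abs _)
  have hbound : ∀ T, ℙ {ω | δ ≤ |(∑ t ∈ range T, if ζhat T t ω ≤ z then (1:ℝ) else 0)/T - G z|}
      ≤ ℙ {ω | ∃ t < T, s/2 < |ζhat T t ω - ζ t ω|}
        + (ℙ {ω | δ/2 ≤ |(∑ t ∈ range T, if ζ t ω ≤ c₁ then (1:ℝ) else 0)/T - G c₁|}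
        + ℙ {ω | δ/2 ≤ |(∑ t ∈ range T, if ζ t ω ≤ c₂ then (1:ℝ) else 0)/T - G c₂|}) := by
    intro T
    exact (measure_mono (hsub T)).trans ((measure_union_le _ _).trans
      (by gcongr; exact measure_union_le _ _))
  have hsum : Tendsto (fun T => ℙ {ω | ∃ t < T, s/2 < |ζhat T t ω - ζ t ω|}
        + (ℙ {ω | δ/2 ≤ |(∑ t ∈ range T, if ζ t ω ≤ c₁ then (1:ℝ) else 0)/T - G c₁|}
        + ℙ {ω | δ/2 ≤ |(∑ t ∈ range T, if ζ t ω ≤ c₂ then (1:ℝ) else 0)/T - G c₂|}))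
      atTop (nhds 0) := by
    have := hA.add (hB₁.add hB₂)
    simpa using this
  exact tendsto_of_tendsto_of_tendsto_of_le_of_le tendsto_const_nhds hsum
    (fun T => zero_le) hbound

/-- With `(ζ_t)` i.i.d. with continuous cdf `F`, approximations `ζ̂_t`
with `max_{t<T}|ζ̂_t − ζ_t| = o_p(1)`, and `q̂_α` the empirical `(1−α)`-quantile of
`(ζ̂_t : t < T)` (defined from the empirical cdf `F̃` of the `ζ̂`'s), one has
`F(q̂_α) → 1−α` in probability as `T → ∞`. -/
theorem stmt_13
    {Ω : Type*} [MeasurableSpace Ω] (ℙ : Measure Ω) [IsProbabilityMeasure ℙ]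
    (F : ℝ → ℝ) (hFcont : Continuous F)
    (α : ℝ) (hα : 0 < α) (hα1 : α < 1)
    (ζ : ℕ → Ω → ℝ) (hmeas : ∀ t, Measurable (ζ t))
    (hindep : ProbabilityTheory.iIndepFun ζ ℙ)
    (hcdf : ∀ t (z : ℝ), ℙ {ω | ζ t ω ≤ z} = ENNReal.ofReal (F z))
    (ζhat : ℕ → ℕ → Ω → ℝ)
    (hconsist : ∀ ε : ℝ, 0 < ε →
      Tendsto (fun T => ℙ {ω | ∃ t < T, ε < |ζhat T t ω - ζ t ω|}) atTop (nhds 0))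
    -- the empirical cdf of the approximations and its (1−α)-quantile
    (Ftilde : ℕ → Ω → ℝ → ℝ)
    (hFtilde : ∀ T ω z, Ftilde T ω z =
      (∑ t ∈ range T, if ζhat T t ω ≤ z then (1:ℝ) else 0) / T)
    (qhat : ℕ → Ω → ℝ)
    (hqhat : ∀ T ω, qhat T ω = sInf {z : ℝ | 1 - α ≤ Ftilde T ω z}) :
    ∀ ε : ℝ, 0 < ε →
      Tendsto (fun T => ℙ {ω | ε < |F (qhat T ω) - (1 - α)|}) atTop (nhds 0) := by
  classical
  -- the true cdf
  set G : ℝ → ℝ := fun c => (ℙ {ω | ζ 0 ω ≤ c}).toReal with hGdef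
  have hGF : ∀ c, G c = max (F c) 0 := by
    intro c
    rw [hGdef]
    simp only [hcdf 0 c, ENNReal.toReal_ofReal']
  have hGcont : Continuous G := by
    have : G = fun c => max (F c) 0 := funext hGF
    rw [this]
    exact hFcont.max continuous_const
  have hGmono : Monotone G := by
    intro x y hxy
    refine ENNReal.toReal_mono (measure_ne_top _ _) (measure_mono ?_)
    intro ω hω
    exact le_trans hω hxy
  have hid : ∀ i, ProbabilityTheory.IdentDistrib (ζ i) (ζ 0) ℙ ℙ := by
    intro i
    refine ⟨(hmeas i).aemeasurable, (hmeas 0).aemeasurable, ?_⟩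
    have h1 : IsProbabilityMeasure (ℙ.map (ζ i)) := Measure.isProbabilityMeasure_map (hmeas i).aemeasurable
    refine MeasureTheory.Measure.ext_of_Iic _ _ (fun c => ?_)
    rw [Measure.map_apply (hmeas i) measurableSet_Iic,
      Measure.map_apply (hmeas 0) measurableSet_Iic]
    show ℙ {ω | ζ i ω ≤ c} = ℙ {ω | ζ 0 ω ≤ c}
    rw [hcdf i c, hcdf 0 c]
  -- key statement for small ε
  have key : ∀ ε : ℝ, 0 < ε → ε < α → ε < 1 - α →
      Tendsto (fun T => ℙ {ω | ε < |F (qhat T ω) - (1 - α)|}) atTop (nhds 0) := by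
    intro ε hε hεα hεα1
    -- find points a b with G a = 1 - α - ε/2, G b = 1 - α + ε/2
    have hlim_lo : ∃ z₁ : ℝ, G z₁ < 1 - α - ε/2 := by
      have htend : Tendsto (fun n : ℕ => ℙ {ω | ζ 0 ω ≤ -(n:ℝ)}) atTop
          (nhds (ℙ (⋂ n : ℕ, {ω | ζ 0 ω ≤ -(n:ℝ)}))) := by
        refine tendsto_measure_iInter_atTop
          (fun n => ((hmeas 0) measurableSet_Iic).nullMeasurableSet) ?_ ⟨0, measure_ne_top _ _⟩
        intro m n hmn ω hω
        simp only [Set.mem_setOf_eq] at hω ⊢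
        have : (m:ℝ) ≤ n := Nat.cast_le.mpr hmn
        linarith
      have hempty : (⋂ n : ℕ, {ω | ζ 0 ω ≤ -(n:ℝ)}) = ∅ := by
        ext ω
        simp only [Set.mem_iInter, Set.mem_setOf_eq, Set.mem_empty_iff_false, iff_false, not_forall]
        obtain ⟨n, hn⟩ := exists_nat_gt (-(ζ 0 ω))
        exact ⟨n, by push_neg; linarith⟩
      rw [hempty, measure_empty] at htend
      have hpos : (0:ENNReal) < ENNReal.ofReal (1 - α - ε/2) :=
        ENNReal.ofReal_pos.mpr (by linarith)
      obtain ⟨n, hn⟩ := (htend.eventually_lt_const hpos).exists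
      refine ⟨-(n:ℝ), ?_⟩
      have := ENNReal.toReal_lt_toReal (measure_ne_top _ _) ENNReal.ofReal_ne_top |>.mpr hn
      rwa [ENNReal.toReal_ofReal (by linarith)] at this
    have hlim_hi : ∃ z₂ : ℝ, 1 - α + ε/2 < G z₂ := by
      have htend : Tendsto (fun n : ℕ => ℙ {ω | ζ 0 ω ≤ (n:ℝ)}) atTop
          (nhds (ℙ (⋃ n : ℕ, {ω | ζ 0 ω ≤ (n:ℝ)}))) := by
        refine tendsto_measure_iUnion_atTop ?_
        intro m n hmn ω hω
        simp only [Set.mem_setOf_eq] at hω ⊢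
        have : (m:ℝ) ≤ n := Nat.cast_le.mpr hmn
        linarith
      have huniv : (⋃ n : ℕ, {ω | ζ 0 ω ≤ (n:ℝ)}) = Set.univ := by
        ext ω
        simp only [Set.mem_iUnion, Set.mem_setOf_eq, Set.mem_univ, iff_true]
        obtain ⟨n, hn⟩ := exists_nat_gt (ζ 0 ω)
        exact ⟨n, hn.le⟩
      rw [huniv, measure_univ] at htend
      have hlt : ENNReal.ofReal (1 - α + ε/2) < 1 := by
        rw [show (1:ENNReal) = ENNReal.ofReal 1 by simp]
        exact ENNReal.ofReal_lt_ofReal_iff_of_nonneg (by linarith) |>.mpr (by linarith)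
      obtain ⟨n, hn⟩ := (htend.eventually_const_lt hlt).exists
      refine ⟨(n:ℝ), ?_⟩
      have := ENNReal.toReal_lt_toReal ENNReal.ofReal_ne_top (measure_ne_top _ _) |>.mpr hn
      rwa [ENNReal.toReal_ofReal (by linarith)] at this
    obtain ⟨z₁, hz₁⟩ := hlim_lo
    obtain ⟨z₂, hz₂⟩ := hlim_hi
    have hIVT := intermediate_value_uIcc (a := z₁) (b := z₂) (f := G) hGcont.continuousOn
    obtain ⟨a, -, ha⟩ : ∃ a, a ∈ Set.uIcc z₁ z₂ ∧ G a = 1 - α - ε/2 := by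
      have : (1 - α - ε/2) ∈ Set.uIcc (G z₁) (G z₂) :=
        Set.mem_uIcc.mpr (Or.inl ⟨hz₁.le, by linarith⟩)
      obtain ⟨a, haI, ha⟩ := hIVT this
      exact ⟨a, haI, ha⟩
    obtain ⟨b, -, hb⟩ : ∃ b, b ∈ Set.uIcc z₁ z₂ ∧ G b = 1 - α + ε/2 := by
      have : (1 - α + ε/2) ∈ Set.uIcc (G z₁) (G z₂) :=
        Set.mem_uIcc.mpr (Or.inl ⟨by linarith, hz₂.le⟩)
      obtain ⟨b, hbI, hbv⟩ := hIVT this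
      exact ⟨b, hbI, hbv⟩
    -- the two LLN-type convergences
    have hta := tilde_tendsto ℙ ζ hmeas hindep hid ζhat hconsist G (fun c => rfl) hGcont
      a (ε/2) (by linarith)
    have htb := tilde_tendsto ℙ ζ hmeas hindep hid ζhat hconsist G (fun c => rfl) hGcont
      b (ε/2) (by linarith)
    -- event inclusion for T ≥ 1
    have hsub : ∀ T : ℕ, 1 ≤ T → {ω | ε < |F (qhat T ω) - (1 - α)|} ⊆
        {ω | ε/2 ≤ |(∑ t ∈ range T, if ζhat T t ω ≤ a then (1:ℝ) else 0)/T - G a|}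
        ∪ {ω | ε/2 ≤ |(∑ t ∈ range T, if ζhat T t ω ≤ b then (1:ℝ) else 0)/T - G b|} := by
      intro T hT ω hω
      simp only [Set.mem_setOf_eq] at hω
      -- from F to G
      have hG_ev : ε < |G (qhat T ω) - (1 - α)| := by
        rcases le_or_gt 0 (F (qhat T ω)) with h0 | h0
        · rwa [hGF, max_eq_left h0]
        · rw [hGF, max_eq_right h0.le]
          rw [abs_sub_comm, abs_of_nonneg (by linarith)]
          linarith
      -- facts about the empirical quantile
      set S : Set ℝ := {z : ℝ | 1 - α ≤ Ftilde T ω z} with hS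
      have hTpos : (0:ℝ) < T := by exact_mod_cast hT
      have hFmono : Monotone (Ftilde T ω) := by
        intro x y hxy
        rw [hFtilde, hFtilde]
        refine div_le_div_of_nonneg_right ?_ (Nat.cast_nonneg T)
        refine Finset.sum_le_sum (fun t _ => ?_)
        by_cases h : ζhat T t ω ≤ x
        · rw [if_pos h, if_pos (h.trans hxy)]
        · rw [if_neg h]; split <;> norm_num
      have hne : (range T).Nonempty := nonempty_range_iff.mpr (by omega)
      have hSne : S.Nonempty := by
        refine ⟨(range T).sup' hne (fun t => ζhat T t ω), ?_⟩
        show 1 - α ≤ Ftilde T ω _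
        rw [hFtilde]
        have : (∑ t ∈ range T, if ζhat T t ω ≤ (range T).sup' hne (fun t => ζhat T t ω)
            then (1:ℝ) else 0) = T := by
          rw [Finset.sum_congr rfl (fun t ht => if_pos (Finset.le_sup' (fun t => ζhat T t ω) ht))]
          simp
        rw [this, div_self (ne_of_gt hTpos)]
        linarith
      have hSbdd : BddBelow S := by
        refine ⟨(range T).inf' hne (fun t => ζhat T t ω), fun z hz => ?_⟩
        by_contra hc
        push_neg at hc
        have : Ftilde T ω z = 0 := by
          rw [hFtilde]
          have : (∑ t ∈ range T, if ζhat T t ω ≤ z then (1:ℝ) else 0) = 0 := by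
            refine Finset.sum_eq_zero (fun t ht => ?_)
            rw [if_neg]
            push_neg
            exact lt_of_lt_of_le hc (Finset.inf'_le _ ht)
          rw [this, zero_div]
        have hzS : 1 - α ≤ Ftilde T ω z := hz
        rw [this] at hzS
        linarith
      have hq : qhat T ω = sInf S := hqhat T ω
      rcases lt_abs.mp hG_ev with h | h
      · -- G qhat > 1 - α + ε  : right event
        right
        have hqb : b < qhat T ω := by
          by_contra hc
          push_neg at hc
          have := hGmono hc
          rw [hb] at this
          linarith
        have hbS : b ∉ S := by
          intro hbS
          have := csInf_le hSbdd hbS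
          rw [← hq] at this
          linarith
        have hFb : Ftilde T ω b < 1 - α := lt_of_not_ge hbS
        rw [hFtilde] at hFb
        show ε/2 ≤ |(∑ t ∈ range T, if ζhat T t ω ≤ b then (1:ℝ) else 0)/T - G b|
        rw [hb]
        have : ε/2 ≤ -((∑ t ∈ range T, if ζhat T t ω ≤ b then (1:ℝ) else 0)/T
            - (1 - α + ε/2)) := by linarith
        exact this.trans (neg_le_abs _)
      · -- G qhat < 1 - α - ε : left event
        left
        have hqa : qhat T ω < a := by
          by_contra hc
          push_neg at hc
          have := hGmono hc
          rw [ha] at this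
          linarith
        rw [hq] at hqa
        obtain ⟨w, hwS, hwa⟩ := exists_lt_of_csInf_lt hSne hqa
        have hFa : 1 - α ≤ Ftilde T ω a := le_trans hwS (hFmono hwa.le)
        rw [hFtilde] at hFa
        show ε/2 ≤ |(∑ t ∈ range T, if ζhat T t ω ≤ a then (1:ℝ) else 0)/T - G a|
        rw [ha]
        have : ε/2 ≤ (∑ t ∈ range T, if ζhat T t ω ≤ a then (1:ℝ) else 0)/T
            - (1 - α - ε/2) := by linarith
        exact this.trans (le_abs_self _)
    -- combine
    have hsum : Tendsto (fun T =>
        ℙ {ω | ε/2 ≤ |(∑ t ∈ range T, if ζhat T t ω ≤ a then (1:ℝ) else 0)/T - G a|}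
        + ℙ {ω | ε/2 ≤ |(∑ t ∈ range T, if ζhat T t ω ≤ b then (1:ℝ) else 0)/T - G b|})
        atTop (nhds 0) := by
      have := hta.add htb
      simpa using this
    refine tendsto_of_tendsto_of_tendsto_of_le_of_le' tendsto_const_nhds hsum
      (Eventually.of_forall (fun T => zero_le)) ?_
    filter_upwards [eventually_ge_atTop 1] with T hT
    exact (measure_mono (hsub T hT)).trans (measure_union_le _ _)
  -- reduce general ε to small ε
  intro ε hε
  set ε' : ℝ := min ε (min α (1 - α)) / 2 with hε'
  have hε'pos : 0 < ε' := by
    apply div_pos _ (by norm_num)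
    exact lt_min hε (lt_min hα (by linarith))
  have hε'ε : ε' ≤ ε := by
    have : min ε (min α (1 - α)) ≤ ε := min_le_left _ _
    linarith
  have hε'α : ε' < α := by
    have h1 : min ε (min α (1 - α)) ≤ α := le_trans (min_le_right _ _) (min_le_left _ _)
    linarith
  have hε'α1 : ε' < 1 - α := by
    have h1 : min ε (min α (1 - α)) ≤ 1 - α := le_trans (min_le_right _ _) (min_le_right _ _)
    linarith
  have h' := key ε' hε'pos hε'α hε'α1
  refine tendsto_of_tendsto_of_tendsto_of_le_of_le tendsto_const_nhds h'
    (fun T => zero_le) (fun T => measure_mono ?_)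
  intro ω hω
  exact lt_of_le_of_lt hε'ε hω
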